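/- Let (I, ≤) be a directed preorder and (X_i, f_{ji}) a regular directed system of topological spaces over (I, ≤), i.e. every transition map f_{ji} is an injective, continuous, open map. Then each canonical map f_{*i} : X_i → X_∞ into the direct limit is an open map; consequently f_{*i} is an open embedding (a homeomorphism onto an open subset of X_∞). -/

import Mathlib

universe u v

/-- A directed system of topological spaces over a preorder `I`:
spaces `X i` with continuous transition maps `map i j : X i → X j` for `i ≤ j`,
satisfying the identity and composition laws. -/
structure TopDirectedSystem (I : Type u) [Preorder I] : Type (max u (v + 1)) where
  X : I → Type v
  top : ∀ i, TopologicalSpace (X i)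
  map : ∀ i j, i ≤ j → X i → X j
  map_continuous : ∀ i j (h : i ≤ j), Continuous (map i j h)
  map_id : ∀ i (x : X i), map i i le_rfl x = x
  map_comp : ∀ i j k (hij : i ≤ j) (hjk : j ≤ k) (x : X i),
    map j k hjk (map i j hij x) = map i k (hij.trans hjk) x

attribute [instance] TopDirectedSystem.top

namespace TopDirectedSystem

variable {I : Type u} [Preorder I] (S : TopDirectedSystem.{u, v} I)

/-- The relation on the disjoint union: `⟨i, x⟩ ∼ ⟨j, y⟩` iff there is `k ≥ i, j`
with `f_{ki} x = f_{kj} y`. -/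
def Rel (p q : Σ i, S.X i) : Prop :=
  ∃ (k : I) (hik : p.1 ≤ k) (hjk : q.1 ≤ k), S.map p.1 k hik p.2 = S.map q.1 k hjk q.2

/-- The direct limit: the quotient of the disjoint union (with the disjoint union
topology) by `Rel`, carrying the quotient topology. -/
def Limit : Type (max u v) := Quot S.Rel

instance : TopologicalSpace S.Limit :=
  inferInstanceAs (TopologicalSpace (Quot S.Rel))

/-- The canonical map `f_{*i} : X i → X_∞`. -/
def ι (i : I) (x : S.X i) : S.Limit :=
  Quot.mk S.Rel ⟨i, x⟩

/-- A directed system is regular if all transition maps are injective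
(continuous) open maps. -/
def Regular : Prop :=
  ∀ i j (h : i ≤ j), Function.Injective (S.map i j h) ∧ IsOpenMap (S.map i j h)

end TopDirectedSystem

open Topology

/-- for a regular directed system, each canonical map
`f_{*i} : X i → X_∞` is an open map; consequently it is an open embedding. -/
theorem iota_isOpenMap_isOpenEmbedding {I : Type u} [Preorder I] [Nonempty I] [IsDirected I (· ≤ ·)]
    (S : TopDirectedSystem.{u, v} I) (hreg : S.Regular) (i : I) :
    IsOpenMap (S.ι i) ∧ IsOpenEmbedding (S.ι i) := by
  -- Rel is an equivalence relation
  have hequiv : Equivalence S.Rel := by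
    constructor
    · intro p; exact ⟨p.1, le_rfl, le_rfl, rfl⟩
    · rintro p q ⟨k, h1, h2, h⟩; exact ⟨k, h2, h1, h.symm⟩
    · rintro p q r ⟨k, h1, h2, h⟩ ⟨k', h1', h2', h'⟩
      obtain ⟨m, hkm, hk'm⟩ := directed_of (· ≤ ·) k k'
      refine ⟨m, h1.trans hkm, h2'.trans hk'm, ?_⟩
      calc S.map p.1 m (h1.trans hkm) p.2
          = S.map k m hkm (S.map p.1 k h1 p.2) := (S.map_comp _ _ _ _ _ _).symm
        _ = S.map k m hkm (S.map q.1 k h2 q.2) := by rw [h]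
        _ = S.map q.1 m (h2.trans hkm) q.2 := S.map_comp _ _ _ _ _ _
        _ = S.map k' m hk'm (S.map q.1 k' h1' q.2) := (S.map_comp _ _ _ _ _ _).symm
        _ = S.map k' m hk'm (S.map r.1 k' h2' r.2) := by rw [h']
        _ = S.map r.1 m (h2'.trans hk'm) r.2 := S.map_comp _ _ _ _ _ _
  have hmk : ∀ p q : Σ j, S.X j, Quot.mk S.Rel p = Quot.mk S.Rel q ↔ S.Rel p q := by
    intro p q
    rw [Quot.eq]
    exact ⟨fun h => (Equivalence.eqvGen_iff hequiv).mp h, fun h => Relation.EqvGen.rel p q h⟩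
  -- continuity
  have hcont : Continuous (S.ι i) := by
    have : S.ι i = (Quot.mk S.Rel) ∘ (Sigma.mk i) := rfl
    rw [this]
    exact continuous_quot_mk.comp continuous_sigmaMk
  -- injectivity
  have hinj : Function.Injective (S.ι i) := by
    intro x y h
    obtain ⟨k, h1, h2, h⟩ := (hmk ⟨i, x⟩ ⟨i, y⟩).mp h
    exact (hreg i k h1).1 (by simpa using h)
  -- open map
  have hopen : IsOpenMap (S.ι i) := by
    intro U hU
    change IsOpen ((Quot.mk S.Rel) ⁻¹' (S.ι i '' U))
    rw [isOpen_sigma_iff]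
    intro j
    have key : (Sigma.mk j) ⁻¹' ((Quot.mk S.Rel) ⁻¹' (S.ι i '' U)) =
        ⋃ (k : I) (hjk : j ≤ k) (hik : i ≤ k),
          S.map j k hjk ⁻¹' (S.map i k hik '' U) := by
      ext y
      simp only [Set.mem_preimage, Set.mem_iUnion, Set.mem_image]
      constructor
      · rintro ⟨x, hx, hq⟩
        obtain ⟨k, h1, h2, h⟩ := (hmk ⟨i, x⟩ ⟨j, y⟩).mp hq
        exact ⟨k, h2, h1, x, hx, h⟩
      · rintro ⟨k, hjk, hik, x, hx, h⟩
        exact ⟨x, hx, (hmk ⟨i, x⟩ ⟨j, y⟩).mpr ⟨k, hik, hjk, h⟩⟩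
    rw [key]
    exact isOpen_iUnion fun k => isOpen_iUnion fun hjk => isOpen_iUnion fun hik =>
      ((hreg i k hik).2 U hU).preimage (S.map_continuous j k hjk)
  exact ⟨hopen, IsOpenEmbedding.of_continuous_injective_isOpenMap hcont hinj hopen⟩
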